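/- Let ℓ ⊂ ℝ² be the line through a point p with unit direction vector d = (cos β, sin β), let ξ ∈ ℝ² with ξ ∉ ℓ, let z* be the orthogonal projection of ξ onto ℓ, and let ξ' := 2z* − ξ be the mirror image of ξ across ℓ. Identify ℝ² with ℂ. For any x ∈ ℝ² and any y ∈ ℓ with y ≠ ξ' such that y lies on the segment from ξ' to x, the polar angles satisfy arg(y − ξ) + arg(x − ξ') ≡ 2β (mod 2π), i.e. as elements of ℝ/2πℤ, the angle of y − ξ equals 2β minus the angle of x − ξ'. -/

import Mathlib

open Real Complex

/-- Reflection law for angles: identify `ℝ²` with `ℂ`, let `ℓ` be the line through `p`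
with unit direction `d = cos β + i sin β`, let `ξ ∉ ℓ`, let `z*` be the orthogonal
projection of `ξ` onto `ℓ` and `ξ' = 2z* − ξ` its mirror image. If `y ∈ ℓ`, `y ≠ ξ'`,
lies on the segment from `ξ'` to an observation point `x`, then
`arg(y − ξ) + arg(x − ξ') ≡ 2β (mod 2π)`. -/
theorem reflection_angle_identity (β : ℝ) (p d : ℂ)
    (hd : d = Real.cos β + Real.sin β * Complex.I)
    (ℓ : Set ℂ) (hℓ : ℓ = {z : ℂ | ∃ t : ℝ, z = p + (t : ℂ) * d})
    (ξ : ℂ) (hξ : ξ ∉ ℓ)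
    (zs : ℂ) (hzs : zs ∈ ℓ) (hproj : (inner ℝ (ξ - zs) d : ℝ) = 0)
    (ξ' : ℂ) (hξ' : ξ' = 2 * zs - ξ)
    (x y : ℂ) (hy : y ∈ ℓ) (hyne : y ≠ ξ') (hseg : y ∈ segment ℝ ξ' x) :
    ((Complex.arg (y - ξ) : Real.Angle) + (Complex.arg (x - ξ') : Real.Angle)) =
      ((2 * β : ℝ) : Real.Angle) := by
  subst hℓ hξ'
  obtain ⟨s, hs⟩ := hzs
  obtain ⟨t, ht⟩ := hy
  set cb : ℝ := Real.cos β with hcb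
  set sb : ℝ := Real.sin β with hsb
  have pyth : sb ^ 2 + cb ^ 2 = 1 := Real.sin_sq_add_cos_sq β
  have hdne : d ≠ 0 := by
    intro h
    have h1 : cb = 0 := by
      have := congrArg Complex.re (h.symm.trans hd).symm
      simpa using this
    have h2 : sb = 0 := by
      have := congrArg Complex.im (h.symm.trans hd).symm
      simpa using this
    rw [h1, h2] at pyth; norm_num at pyth
  -- components of the inner product condition
  set a : ℝ := (ξ - zs).re with ha
  set b : ℝ := (ξ - zs).im with hb
  have hproj' : a * cb + b * sb = 0 := by
    rw [Complex.inner] at hproj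
    have : (d * starRingEnd ℂ (ξ - zs)).re = a * cb + b * sb := by
      rw [hd]
      simp [Complex.mul_re, ha, hb]
      ring
    rw [this] at hproj; exact hproj
  set c : ℝ := -a * sb + b * cb with hc
  have hIdre : (Complex.I * d).re = -sb := by rw [hd]; simp
  have hIdim : (Complex.I * d).im = cb := by rw [hd]; simp
  have hkey : ξ - zs = (c : ℂ) * (Complex.I * d) := by
    apply Complex.ext
    · rw [Complex.re_ofReal_mul, hIdre]
      show a = c * (-sb)
      rw [hc]
      linear_combination cb * hproj' - a * pyth
    · rw [Complex.im_ofReal_mul, hIdim]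
      show b = c * cb
      rw [hc]
      linear_combination sb * hproj' - b * pyth
  have hcne : c ≠ 0 := by
    intro h
    apply hξ
    refine ⟨s, ?_⟩
    have h0 : ξ - zs = 0 := by rw [hkey, h]; simp
    have h1 : ξ = zs := by linear_combination h0
    rw [h1, hs]
  have hξeq : ξ = zs + (c : ℂ) * (Complex.I * d) := by linear_combination hkey
  set w : ℂ := ((t - s : ℝ) : ℂ) - (c : ℂ) * Complex.I with hw
  have hwne : w ≠ 0 := by
    intro h
    have := congrArg Complex.im h
    simp [hw] at this
    exact hcne this
  have hyξ : y - ξ = w * d := by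
    rw [ht, hξeq, hs, hw]
    push_cast
    ring
  have hyξ' : y - (2 * zs - ξ) = (starRingEnd ℂ w) * d := by
    rw [ht, hξeq, hs, hw]
    simp only [map_sub, Complex.conj_ofReal, map_mul, Complex.conj_I]
    push_cast
    ring
  -- use the segment hypothesis
  obtain ⟨u, v, hu, hv, huv, hsum⟩ := hseg
  have hvne : v ≠ 0 := by
    intro h
    apply hyne
    have hu1 : u = 1 := by linarith
    rw [← hsum, h, hu1]
    simp
  have hvpos : 0 < v := lt_of_le_of_ne hv (Ne.symm hvne)
  have hxy : x - (2 * zs - ξ) = ((v⁻¹ : ℝ) : ℂ) * (y - (2 * zs - ξ)) := by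
    have hu1 : (u : ℂ) = 1 - (v : ℂ) := by
      have : u = 1 - v := by linarith
      exact_mod_cast this
    have h1 : y - (2 * zs - ξ) = (v : ℂ) * (x - (2 * zs - ξ)) := by
      rw [← hsum]
      simp only [smul_eq_mul, Complex.real_smul]
      rw [hu1]
      ring
    rw [h1, ← mul_assoc, ← Complex.ofReal_mul, inv_mul_cancel₀ hvne]
    simp
  have hargx : (Complex.arg (x - (2 * zs - ξ)) : Real.Angle)
      = (Complex.arg (y - (2 * zs - ξ)) : Real.Angle) := by
    rw [hxy, Complex.arg_real_mul _ (inv_pos.mpr hvpos)]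
  have hargd : (Complex.arg d : Real.Angle) = (β : Real.Angle) := by
    have h := Complex.arg_cos_add_sin_mul_I_coe_angle (β : Real.Angle)
    rw [Real.Angle.cos_coe, Real.Angle.sin_coe] at h
    rw [hd]; exact h
  rw [hargx, hyξ, hyξ', Complex.arg_mul_coe_angle hwne hdne,
    Complex.arg_mul_coe_angle (by simpa using hwne) hdne,
    Complex.arg_conj_coe_angle, hargd]
  have h2β : ((2 * β : ℝ) : Real.Angle) = (β : Real.Angle) + (β : Real.Angle) := by
    rw [← Real.Angle.coe_add]; ring_nf
  rw [h2β]
  abel
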